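/- Let A and B be 2×2 matrices over 𝒪 with nonzero determinant. Then U A U = U B U if and only if δ₁(A) = δ₁(B) and δ₂(A) = δ₂(B). -/

import Mathlib

open Matrix

/-- The double coset `U A U` with respect to the unimodular group
`U = GL₂(𝒪)` (matrices over `𝒪` whose determinant is a unit). -/
def doubleCoset' {O : Type*} [CommRing O] (A : Matrix (Fin 2) (Fin 2) O) :
    Set (Matrix (Fin 2) (Fin 2) O) :=
  {X | ∃ P Q : Matrix (Fin 2) (Fin 2) O, IsUnit P.det ∧ IsUnit Q.det ∧ X = P * A * Q}

/-- The first determinantal divisor `δ₁(A)`. -/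
def delta1 {O : Type*} [CommRing O] (A : Matrix (Fin 2) (Fin 2) O) : Ideal O :=
  Ideal.span {A 0 0, A 0 1, A 1 0, A 1 1}

/-- The second determinantal divisor `δ₂(A) = (det A)𝒪`. -/
def delta2 {O : Type*} [CommRing O] (A : Matrix (Fin 2) (Fin 2) O) : Ideal O :=
  Ideal.span {A.det}

namespace Stmt0Aux

set_option linter.unusedSectionVars false
set_option maxHeartbeats 1600000

section CommRingPart

variable {O : Type*} [CommRing O]

lemma mem_delta1 (A : Matrix (Fin 2) (Fin 2) O) (i j : Fin 2) : A i j ∈ delta1 A := by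
  have : A i j ∈ ({A 0 0, A 0 1, A 1 0, A 1 1} : Set O) := by
    fin_cases i <;> fin_cases j <;> simp
  exact Ideal.subset_span this

lemma delta1_mul_left_le (P A : Matrix (Fin 2) (Fin 2) O) : delta1 (P * A) ≤ delta1 A := by
  have h : ∀ i j, (P * A) i j ∈ delta1 A := by
    intro i j
    rw [Matrix.mul_apply, Fin.sum_univ_two]
    exact Ideal.add_mem _ (Ideal.mul_mem_left _ _ (mem_delta1 A _ j))
      (Ideal.mul_mem_left _ _ (mem_delta1 A _ j))
  rw [delta1, Ideal.span_le]
  intro x hx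
  simp only [Set.mem_insert_iff, Set.mem_singleton_iff] at hx
  rcases hx with rfl | rfl | rfl | rfl <;> exact h _ _

lemma delta1_mul_right_le (A Q : Matrix (Fin 2) (Fin 2) O) : delta1 (A * Q) ≤ delta1 A := by
  have h : ∀ i j, (A * Q) i j ∈ delta1 A := by
    intro i j
    rw [Matrix.mul_apply, Fin.sum_univ_two]
    exact Ideal.add_mem _ (Ideal.mul_mem_right _ _ (mem_delta1 A i _))
      (Ideal.mul_mem_right _ _ (mem_delta1 A i _))
  rw [delta1, Ideal.span_le]
  intro x hx
  simp only [Set.mem_insert_iff, Set.mem_singleton_iff] at hx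
  rcases hx with rfl | rfl | rfl | rfl <;> exact h _ _

lemma delta1_unit_eq (P A Q : Matrix (Fin 2) (Fin 2) O) (hP : IsUnit P.det)
    (hQ : IsUnit Q.det) : delta1 (P * A * Q) = delta1 A := by
  refine le_antisymm (le_trans (delta1_mul_right_le _ _) (delta1_mul_left_le _ _)) ?_
  have hPAQ : P⁻¹ * (P * A * Q) * Q⁻¹ = A := by
    have h1 : P⁻¹ * (P * A * Q) * Q⁻¹ = (P⁻¹ * P) * A * (Q * Q⁻¹) := by
      simp only [Matrix.mul_assoc]
    rw [h1, Matrix.nonsing_inv_mul _ hP, Matrix.mul_nonsing_inv _ hQ, Matrix.one_mul,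
      Matrix.mul_one]
  conv_lhs => rw [← hPAQ]
  exact le_trans (delta1_mul_right_le _ _) (delta1_mul_left_le _ _)

lemma delta2_unit_eq [IsDomain O] (P A Q : Matrix (Fin 2) (Fin 2) O) (hP : IsUnit P.det)
    (hQ : IsUnit Q.det) : delta2 (P * A * Q) = delta2 A := by
  unfold delta2
  rw [Ideal.span_singleton_eq_span_singleton, Matrix.det_mul, Matrix.det_mul]
  exact ((associated_mul_unit_left _ _ hQ).trans (associated_unit_mul_left _ _ hP))

lemma doubleCoset_eq (A B P Q : Matrix (Fin 2) (Fin 2) O) (hP : IsUnit P.det)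
    (hQ : IsUnit Q.det) (hB : B = P * A * Q) : doubleCoset' B = doubleCoset' A := by
  have hA : A = P⁻¹ * B * Q⁻¹ := by
    rw [hB]
    have h1 : P⁻¹ * (P * A * Q) * Q⁻¹ = (P⁻¹ * P) * A * (Q * Q⁻¹) := by
      simp only [Matrix.mul_assoc]
    rw [h1, Matrix.nonsing_inv_mul _ hP, Matrix.mul_nonsing_inv _ hQ, Matrix.one_mul,
      Matrix.mul_one]
  ext X
  constructor
  · rintro ⟨P', Q', hP', hQ', rfl⟩
    refine ⟨P' * P, Q * Q', ?_, ?_, ?_⟩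
    · rw [Matrix.det_mul]; exact hP'.mul hP
    · rw [Matrix.det_mul]; exact hQ.mul hQ'
    · rw [hB]; simp only [Matrix.mul_assoc]
  · rintro ⟨P', Q', hP', hQ', rfl⟩
    refine ⟨P' * P⁻¹, Q⁻¹ * Q', ?_, ?_, ?_⟩
    · rw [Matrix.det_mul]; exact hP'.mul (Matrix.isUnit_nonsing_inv_det _ hP)
    · rw [Matrix.det_mul]; exact (Matrix.isUnit_nonsing_inv_det _ hQ).mul hQ'
    · rw [hA]; simp only [Matrix.mul_assoc]

end CommRingPart

section DedekindPart

open scoped Classical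

variable {O : Type*} [CommRing O] [IsDomain O] [IsDedekindDomain O]

lemma crt_family (S : Finset (Ideal O)) (hmax : ∀ 𝔭 ∈ S, Ideal.IsMaximal 𝔭)
    (M : Ideal O) (c : Ideal O → O) (hc : ∀ 𝔭 ∈ S, c 𝔭 ∈ M) :
    ∃ x ∈ M, ∀ 𝔭 ∈ S, x - c 𝔭 ∈ 𝔭 * M := by
  classical
  have key : ∀ 𝔭 ∈ S, ∃ u : O, u - 1 ∈ 𝔭 ∧ ∀ 𝔮 ∈ S, 𝔮 ≠ 𝔭 → u ∈ 𝔮 := by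
    intro 𝔭 h𝔭
    have hco : IsCoprime 𝔭 (∏ 𝔮 ∈ S.erase 𝔭, 𝔮) :=
      IsCoprime.prod_right fun 𝔮 h𝔮 =>
        Ideal.isCoprime_iff_sup_eq.mpr ((hmax 𝔭 h𝔭).coprime_of_ne
          (hmax 𝔮 (Finset.mem_of_mem_erase h𝔮)) (Finset.ne_of_mem_erase h𝔮).symm)
    rw [Ideal.isCoprime_iff_sup_eq] at hco
    have h1 : (1 : O) ∈ 𝔭 ⊔ ∏ 𝔮 ∈ S.erase 𝔭, 𝔮 := hco ▸ Submodule.mem_top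
    obtain ⟨p, hp, m, hm, hpm⟩ := Submodule.mem_sup.mp h1
    refine ⟨m, ?_, ?_⟩
    · rw [show m - 1 = -p by linear_combination hpm]
      exact 𝔭.neg_mem hp
    · intro 𝔮 h𝔮 hne
      exact Ideal.le_of_dvd (Finset.dvd_prod_of_mem _ (Finset.mem_erase.mpr ⟨hne, h𝔮⟩)) hm
  choose! u hu1 hu2 using key
  refine ⟨∑ 𝔭 ∈ S, u 𝔭 * c 𝔭, Ideal.sum_mem _ fun 𝔮 h𝔮 => Ideal.mul_mem_left _ _ (hc 𝔮 h𝔮), ?_⟩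
  intro 𝔭 h𝔭
  have hsplit : (∑ q ∈ S, u q * c q) - c 𝔭 =
      (u 𝔭 - 1) * c 𝔭 + ∑ q ∈ S.erase 𝔭, u q * c q := by
    rw [← Finset.add_sum_erase _ _ h𝔭]; ring
  rw [hsplit]
  refine Ideal.add_mem _ (Ideal.mul_mem_mul (hu1 𝔭 h𝔭) (hc 𝔭 h𝔭)) (Ideal.sum_mem _ ?_)
  intro q hq
  exact Ideal.mul_mem_mul
    (hu2 q (Finset.mem_of_mem_erase hq) 𝔭 h𝔭 (Finset.ne_of_mem_erase hq).symm)
    (hc q (Finset.mem_of_mem_erase hq))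

lemma conc (M Y : Ideal O) (hM : M ≠ ⊥) (r : O) (hr : r ∈ M)
    (h : ∀ 𝔭 : Ideal O, 𝔭.IsMaximal → Y ≤ 𝔭 → r ∉ 𝔭 * M) :
    Ideal.span {r} ⊔ M * Y = M := by
  have hle : Ideal.span {r} ⊔ M * Y ≤ M :=
    sup_le ((Ideal.span_singleton_le_iff_mem _).mpr hr) Ideal.mul_le_left
  obtain ⟨C, hC⟩ := Ideal.dvd_iff_le.mpr hle
  by_cases hCtop : C = ⊤
  · rw [hC, hCtop, Ideal.mul_top]
  obtain ⟨𝔭, h𝔭max, hC𝔭⟩ := Ideal.exists_le_maximal C hCtop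
  exfalso
  have hM0 : M ≠ 0 := hM
  have hYC : Y ≤ C := by
    have hdvd : M * C ∣ M * Y := Ideal.dvd_iff_le.mpr (le_trans le_sup_right (le_of_eq hC))
    exact Ideal.le_of_dvd ((mul_dvd_mul_iff_left hM0).mp hdvd)
  refine h 𝔭 h𝔭max (hYC.trans hC𝔭) ?_
  have hrMC : r ∈ M * C := by
    have := le_trans le_sup_left (le_of_eq hC)
    exact this (Ideal.mem_span_singleton_self r)
  have : M * C ≤ 𝔭 * M := by
    rw [mul_comm]
    exact Ideal.mul_mono_left hC𝔭
  exact this hrMC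

lemma mem_factors_of_le {Y 𝔭 : Ideal O} (hY : Y ≠ ⊥) (h𝔭 : 𝔭.IsMaximal) (hle : Y ≤ 𝔭) :
    𝔭 ∈ (UniqueFactorizationMonoid.normalizedFactors Y).toFinset :=
  Multiset.mem_toFinset.mpr ((Ideal.mem_normalizedFactors_iff hY).mpr ⟨h𝔭.isPrime, hle⟩)

lemma factors_maximal {Y : Ideal O} (hY : Y ≠ ⊥) :
    ∀ 𝔭 ∈ (UniqueFactorizationMonoid.normalizedFactors Y).toFinset, Ideal.IsMaximal 𝔭 := by
  intro 𝔭 h𝔭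
  rw [Multiset.mem_toFinset, Ideal.mem_normalizedFactors_iff hY] at h𝔭
  exact h𝔭.1.isMaximal (fun hbot => hY (le_bot_iff.mp (hbot ▸ h𝔭.2)))

lemma exists_gen (M Y : Ideal O) (hM : M ≠ ⊥) (hY : Y ≠ ⊥) :
    ∃ r ∈ M, Ideal.span {r} ⊔ M * Y = M := by
  classical
  set S := (UniqueFactorizationMonoid.normalizedFactors Y).toFinset with hS
  have hmax := factors_maximal hY
  have hsel : ∀ 𝔭 ∈ S, ∃ z, z ∈ M ∧ z ∉ 𝔭 * M := by
    intro 𝔭 h𝔭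
    have hne : 𝔭 * M ≠ M := by
      intro he
      have h2 : M * 𝔭 = M * ⊤ := by rw [mul_comm, he, Ideal.mul_top]
      exact (hmax 𝔭 h𝔭).ne_top (mul_left_cancel₀ hM h2)
    have hlt : 𝔭 * M < M := lt_of_le_of_ne Ideal.mul_le_right hne
    obtain ⟨z, hzM, hz⟩ := SetLike.exists_of_lt hlt
    exact ⟨z, hzM, hz⟩
  choose! z hz1 hz2 using hsel
  obtain ⟨x, hxM, hx⟩ := crt_family S hmax M z hz1
  refine ⟨x, hxM, conc M Y hM x hxM ?_⟩
  intro 𝔭 hm hle hcontra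
  have h𝔭S : 𝔭 ∈ S := mem_factors_of_le hY hm hle
  have hdiff := (𝔭 * M).sub_mem hcontra (hx 𝔭 h𝔭S)
  have hz𝔭 : z 𝔭 ∈ 𝔭 * M := by simpa using hdiff
  exact hz2 𝔭 h𝔭S hz𝔭

lemma delta1_ne_bot (A : Matrix (Fin 2) (Fin 2) O) (hA : A.det ≠ 0) : delta1 A ≠ ⊥ := by
  intro h
  apply hA
  have h00 : A 0 0 = 0 := by have hm := mem_delta1 A 0 0; rw [h] at hm; simpa using hm
  have h01 : A 0 1 = 0 := by have hm := mem_delta1 A 0 1; rw [h] at hm; simpa using hm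
  have h10 : A 1 0 = 0 := by have hm := mem_delta1 A 1 0; rw [h] at hm; simpa using hm
  have h11 : A 1 1 = 0 := by have hm := mem_delta1 A 1 1; rw [h] at hm; simpa using hm
  rw [Matrix.det_fin_two, h00, h01, h10, h11]
  ring

lemma exists_corner (A : Matrix (Fin 2) (Fin 2) O) (hA : A.det ≠ 0) :
    ∃ P Q : Matrix (Fin 2) (Fin 2) O, P.det = 1 ∧ Q.det = 1 ∧
      Ideal.span {(P * A * Q) 0 0} ⊔ delta1 A * Ideal.span {A.det} = delta1 A := by
  classical
  set I := delta1 A with hIdef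
  have hI : I ≠ ⊥ := delta1_ne_bot A hA
  set Y : Ideal O := Ideal.span {A.det} with hYdef
  have hY : Y ≠ ⊥ := by
    rw [hYdef, Ne, Ideal.span_singleton_eq_bot]; exact hA
  set f : O → O → O := fun x y => A 0 0 + x * A 1 0 + (A 0 1 + x * A 1 1) * y with hfdef
  set S := (UniqueFactorizationMonoid.normalizedFactors Y).toFinset with hS
  have hmax := factors_maximal hY
  have hsel : ∀ 𝔭 ∈ S, ∃ s, ∃ t, f s t ∉ 𝔭 * I := by
    intro 𝔭 h𝔭
    by_contra hcon
    push_neg at hcon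
    have h00 : A 0 0 ∈ 𝔭 * I := by simpa [hfdef] using hcon 0 0
    have h10 : A 1 0 ∈ 𝔭 * I := by
      have := hcon 1 0
      simp only [hfdef] at this
      have h' : A 0 0 + 1 * A 1 0 + (A 0 1 + 1 * A 1 1) * 0 = A 0 0 + A 1 0 := by ring
      rw [h'] at this
      simpa using (𝔭 * I).sub_mem this h00
    have h01 : A 0 1 ∈ 𝔭 * I := by
      have := hcon 0 1
      simp only [hfdef] at this
      have h' : A 0 0 + 0 * A 1 0 + (A 0 1 + 0 * A 1 1) * 1 = A 0 0 + A 0 1 := by ring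
      rw [h'] at this
      simpa using (𝔭 * I).sub_mem this h00
    have h11 : A 1 1 ∈ 𝔭 * I := by
      have := hcon 1 1
      simp only [hfdef] at this
      have h' : A 0 0 + 1 * A 1 0 + (A 0 1 + 1 * A 1 1) * 1
          = (A 0 0 + A 1 0) + (A 0 1 + A 1 1) := by ring
      rw [h'] at this
      have h2 := (𝔭 * I).sub_mem this ((𝔭 * I).add_mem h00 h10)
      have h3 := (𝔭 * I).sub_mem h2 h01
      simpa using h3
    have hle : I ≤ 𝔭 * I := by
      rw [hIdef, delta1, Ideal.span_le]
      intro x hx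
      simp only [Set.mem_insert_iff, Set.mem_singleton_iff] at hx
      rcases hx with rfl | rfl | rfl | rfl <;> assumption
    have heq : I * 𝔭 = I * ⊤ := by
      rw [Ideal.mul_top, mul_comm]
      exact le_antisymm Ideal.mul_le_right hle
    exact (hmax 𝔭 h𝔭).ne_top (mul_left_cancel₀ hI heq)
  choose! xs ys hxy using hsel
  obtain ⟨x, -, hx⟩ := crt_family S hmax ⊤ xs (fun _ _ => trivial)
  obtain ⟨y, -, hy⟩ := crt_family S hmax ⊤ ys (fun _ _ => trivial)
  have hmem : f x y ∈ I := by
    refine Ideal.add_mem _ (Ideal.add_mem _ (mem_delta1 A 0 0)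
      (Ideal.mul_mem_left _ _ (mem_delta1 A 1 0))) (Ideal.mul_mem_right _ _ ?_)
    exact Ideal.add_mem _ (mem_delta1 A 0 1) (Ideal.mul_mem_left _ _ (mem_delta1 A 1 1))
  have hnot : ∀ 𝔭 : Ideal O, 𝔭.IsMaximal → Y ≤ 𝔭 → f x y ∉ 𝔭 * I := by
    intro 𝔭 hm hle hcon
    have h𝔭S : 𝔭 ∈ S := mem_factors_of_le hY hm hle
    have hx𝔭 : x - xs 𝔭 ∈ 𝔭 := by simpa using hx 𝔭 h𝔭S
    have hy𝔭 : y - ys 𝔭 ∈ 𝔭 := by simpa using hy 𝔭 h𝔭S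
    have hdiff : f x y - f (xs 𝔭) (ys 𝔭) ∈ 𝔭 * I := by
      have hid : f x y - f (xs 𝔭) (ys 𝔭) =
          (x - xs 𝔭) * A 1 0 + (y - ys 𝔭) * A 0 1 +
            (x * (y - ys 𝔭) + ys 𝔭 * (x - xs 𝔭)) * A 1 1 := by
        simp only [hfdef]; ring
      rw [hid]
      refine Ideal.add_mem _ (Ideal.add_mem _ ?_ ?_) ?_
      · exact Ideal.mul_mem_mul hx𝔭 (mem_delta1 A 1 0)
      · exact Ideal.mul_mem_mul hy𝔭 (mem_delta1 A 0 1)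
      · refine Ideal.mul_mem_mul ?_ (mem_delta1 A 1 1)
        exact 𝔭.add_mem (𝔭.mul_mem_left _ hy𝔭) (𝔭.mul_mem_left _ hx𝔭)
    have : f (xs 𝔭) (ys 𝔭) ∈ 𝔭 * I := by
      simpa using (𝔭 * I).sub_mem hcon hdiff
    exact hxy 𝔭 h𝔭S this
  refine ⟨!![1, x; 0, 1], !![1, 0; y, 1], by simp [Matrix.det_fin_two_of], by
    simp [Matrix.det_fin_two_of], ?_⟩
  have hcorner : (!![1, x; 0, 1] * A * !![1, 0; y, 1]) 0 0 = f x y := by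
    rw [Matrix.eta_fin_two A]
    simp [Matrix.mul_fin_two, hfdef]
  rw [hcorner]
  exact conc I Y hI (f x y) hmem hnot

lemma smul_matrix_cancel {d : O} (hd : d ≠ 0) {X Y : Matrix (Fin 2) (Fin 2) O}
    (h : d • X = d • Y) : X = Y := by
  ext i j
  have := congrFun (congrFun h i) j
  simp only [Matrix.smul_apply, smul_eq_mul] at this
  exact mul_left_cancel₀ hd this

lemma core (d : O) (hd0 : d ≠ 0) (hdnu : ¬ IsUnit d)
    (I J J' : Ideal O) (hI : I ≠ ⊥)
    (a b₁ c₁ e a' b₁' c₁' e' : O)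
    (haI : Ideal.span {a} = I * J) (ha'I : Ideal.span {a'} = I * J')
    (haM : a ∈ I) (ha'M : a' ∈ I)
    (hJ : J ⊔ Ideal.span {d} = ⊤) (hJ' : J' ⊔ Ideal.span {d} = ⊤)
    (hdet : a * e - d * b₁ * (d * c₁) = d) (hdet' : a' * e' - d * b₁' * (d * c₁') = d)
    (hdII : Ideal.span {d} ≤ I * I) :
    ∃ P Q : Matrix (Fin 2) (Fin 2) O, P.det = 1 ∧ Q.det = 1 ∧
      !![a', d * b₁'; d * c₁', e'] = P * !![a, d * b₁; d * c₁, e] * Q := by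
  classical
  set Dd : Ideal O := Ideal.span {d} with hDd
  have hDdbot : Dd ≠ ⊥ := by rw [hDd, Ne, Ideal.span_singleton_eq_bot]; exact hd0
  have hDdtop : Dd ≠ ⊤ := by rw [hDd, Ne, Ideal.span_singleton_eq_top]; exact hdnu
  -- a and a' are nonzero
  have ha0 : a ≠ 0 := by
    intro h
    have : I * J = ⊥ := by rw [← haI, h, Ideal.span_singleton_eq_bot]
    rcases Ideal.mul_eq_bot.mp this with h' | h'
    · exact hI h'
    · apply hDdtop; rw [← hJ, h', bot_sup_eq]
  have ha'0 : a' ≠ 0 := by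
    intro h
    have : I * J' = ⊥ := by rw [← ha'I, h, Ideal.span_singleton_eq_bot]
    rcases Ideal.mul_eq_bot.mp this with h' | h'
    · exact hI h'
    · apply hDdtop; rw [← hJ', h', bot_sup_eq]
  have hJbot : J ≠ ⊥ := by
    intro h
    apply ha0
    rw [← Ideal.span_singleton_eq_bot, haI, h, Ideal.mul_bot]
  have hJ'bot : J' ≠ ⊥ := by
    intro h
    apply ha'0
    rw [← Ideal.span_singleton_eq_bot, ha'I, h, Ideal.mul_bot]
  -- the ideal 𝔐 with Dd = I * I * 𝔐
  obtain ⟨𝔐, h𝔐⟩ : (I * I) ∣ Dd := Ideal.dvd_iff_le.mpr hdII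
  have h𝔐bot : 𝔐 ≠ ⊥ := by
    intro h
    apply hDdbot
    rw [h𝔐, h, Ideal.mul_bot]
  -- choose r
  obtain ⟨r, hr𝔐, hrgen⟩ := exists_gen 𝔐 (J * J') h𝔐bot
    (by intro h; rcases Ideal.mul_eq_bot.mp h with h' | h'; exacts [hJbot h', hJ'bot h'])
  obtain ⟨𝔑, h𝔑⟩ : 𝔐 ∣ Ideal.span {r} :=
    Ideal.dvd_iff_le.mpr ((Ideal.span_singleton_le_iff_mem _).mpr hr𝔐)
  have h𝔑cop : 𝔑 ⊔ J * J' = ⊤ := by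
    have : 𝔐 * (𝔑 ⊔ J * J') = 𝔐 * ⊤ := by
      rw [Ideal.mul_sup, ← h𝔑, hrgen, Ideal.mul_top]
    exact mul_left_cancel₀ h𝔐bot this
  -- the ideal 𝔖
  set 𝔖 : Ideal O := Dd.colon (Ideal.span {e * e'}) with h𝔖
  have hDd𝔖 : Dd ≤ 𝔖 := by
    intro x hx
    rw [h𝔖, Ideal.mem_colon_span_singleton]
    exact Ideal.mul_mem_right _ _ hx
  -- coprimality J ⊔ span{r} * 𝔖 = ⊤ and same for J'
  have hD𝔐 : Dd ≤ 𝔐 := by rw [h𝔐]; exact Ideal.mul_le_right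
  have hcopJ : ∀ K : Ideal O, K ⊔ Dd = ⊤ → J * J' ≤ K → K ⊔ Ideal.span {r} * 𝔖 = ⊤ := by
    intro K hK hJJ'K
    have c𝔐 : IsCoprime K 𝔐 := Ideal.isCoprime_iff_sup_eq.mpr
      (top_le_iff.mp (by rw [← hK]; exact sup_le_sup_left hD𝔐 K))
    have c𝔖 : IsCoprime K 𝔖 := Ideal.isCoprime_iff_sup_eq.mpr
      (top_le_iff.mp (by rw [← hK]; exact sup_le_sup_left hDd𝔖 K))
    have c𝔑 : IsCoprime K 𝔑 := Ideal.isCoprime_iff_sup_eq.mpr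
      (top_le_iff.mp (by rw [← h𝔑cop, sup_comm 𝔑 (J * J')]; exact sup_le_sup hJJ'K le_rfl))
    have : IsCoprime K (𝔐 * 𝔑 * 𝔖) := ((c𝔐.mul_right c𝔑).mul_right c𝔖)
    rw [← h𝔑] at this
    exact Ideal.isCoprime_iff_sup_eq.mp this
  -- obtain q and t
  obtain ⟨q, hqJ, n, hn, hqn⟩ := Submodule.mem_sup.mp (by
    rw [hcopJ J hJ Ideal.mul_le_left]; exact Submodule.mem_top :
    (1 : O) ∈ J ⊔ Ideal.span {r} * 𝔖)
  obtain ⟨t, htJ', n', hn', htn⟩ := Submodule.mem_sup.mp (by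
    rw [hcopJ J' hJ' Ideal.mul_le_right]; exact Submodule.mem_top :
    (1 : O) ∈ J' ⊔ Ideal.span {r} * 𝔖)
  -- obtain s with r * s = q * t - 1
  have hqt : q * t - 1 ∈ Ideal.span {r} * 𝔖 := by
    have hid : q * t - 1 = -(q * n') - n := by linear_combination q * htn + hqn
    rw [hid]
    exact Submodule.sub_mem _ (Submodule.neg_mem _ (Ideal.mul_mem_left _ _ hn')) hn
  obtain ⟨s, hs𝔖, hrs⟩ := Ideal.mem_span_singleton_mul.mp hqt
  -- the auxiliary elements k, k'
  have haek : a * e = d * (1 + d * (b₁ * c₁)) := by linear_combination hdet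
  have ha'e'k : a' * e' = d * (1 + d * (b₁' * c₁')) := by linear_combination hdet'
  -- membership m1 : a' * q * e = d * m
  have hm1 : ∃ m, a' * q * e = d * m := by
    have h1 : q * a' * (1 + d * (b₁ * c₁)) ∈ Ideal.span {a} := by
      rw [haI, mul_comm I J]
      exact Ideal.mul_mem_right _ _ (Ideal.mul_mem_mul hqJ ha'M)
    obtain ⟨m, hm⟩ := Ideal.mem_span_singleton'.mp h1
    refine ⟨m, mul_left_cancel₀ ha0 ?_⟩
    linear_combination q * a' * haek - d * hm
  -- membership m4 : a * e' * t = d * m'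
  have hm4 : ∃ m', a * e' * t = d * m' := by
    have h1 : t * a * (1 + d * (b₁' * c₁')) ∈ Ideal.span {a'} := by
      rw [ha'I, mul_comm I J']
      exact Ideal.mul_mem_right _ _ (Ideal.mul_mem_mul htJ' haM)
    obtain ⟨m', hm'⟩ := Ideal.mem_span_singleton'.mp h1
    refine ⟨m', mul_left_cancel₀ ha'0 ?_⟩
    linear_combination t * a * ha'e'k - d * hm'
  -- membership m2 : a * a' * r = d * m₂
  have hm2 : ∃ m₂, a * a' * r = d * m₂ := by
    have h1 : a * a' * r ∈ Ideal.span {a} * Ideal.span {a'} * 𝔐 :=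
      Ideal.mul_mem_mul (Ideal.mul_mem_mul (Ideal.mem_span_singleton_self a)
        (Ideal.mem_span_singleton_self a')) hr𝔐
    rw [haI, ha'I] at h1
    have h2 : I * J * (I * J') * 𝔐 = Dd * (J * J') := by rw [h𝔐]; ring
    rw [h2] at h1
    have h3 : a * a' * r ∈ Dd := Ideal.mul_le_left h1
    obtain ⟨m₂, hm₂⟩ := Ideal.mem_span_singleton'.mp h3
    exact ⟨m₂, by linear_combination -hm₂⟩
  -- membership m3 : e * e' * s = d * m₃
  have hm3 : ∃ m₃, e * e' * s = d * m₃ := by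
    have h1 : s * (e * e') ∈ Dd := Ideal.mem_colon_span_singleton.mp hs𝔖
    obtain ⟨m₃, hm₃⟩ := Ideal.mem_span_singleton'.mp h1
    exact ⟨m₃, by linear_combination -hm₃⟩
  obtain ⟨m, hm⟩ := hm1
  obtain ⟨m', hm'⟩ := hm4
  obtain ⟨m₂, hm₂⟩ := hm2
  obtain ⟨m₃, hm₃⟩ := hm3
  -- the matrices
  set Am : Matrix (Fin 2) (Fin 2) O := !![a, d * b₁; d * c₁, e] with hAm
  set Bm : Matrix (Fin 2) (Fin 2) O := !![a', d * b₁'; d * c₁', e'] with hBm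
  set Qm : Matrix (Fin 2) (Fin 2) O := !![q, r; s, t] with hQm
  have hdetAm : Am.det = d := by rw [hAm, Matrix.det_fin_two_of]; linear_combination hdet
  have hdetBm : Bm.det = d := by rw [hBm, Matrix.det_fin_two_of]; linear_combination hdet'
  have hdetQm : Qm.det = 1 := by rw [hQm, Matrix.det_fin_two_of]; linear_combination -hrs
  set Pm : Matrix (Fin 2) (Fin 2) O :=
    !![m + b₁' * s * e - a' * r * c₁ - d * (b₁' * t * c₁),
       m₂ - a' * q * b₁ - d * (b₁' * s * b₁) + b₁' * t * a;
       m₃ + c₁' * q * e - d * (c₁' * r * c₁) - e' * t * c₁,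
       m' - d * (c₁' * q * b₁) - e' * s * b₁ + c₁' * r * a] with hPm
  have hN : Bm * Qm * Am.adjugate = d • Pm := by
    rw [Matrix.adjugate_fin_two, hAm, hBm, hQm, hPm]
    ext i j
    fin_cases i <;> fin_cases j
    · simp [Matrix.mul_apply, Fin.sum_univ_two, Fin.mk_zero, Fin.mk_one]
      linear_combination hm
    · simp [Matrix.mul_apply, Fin.sum_univ_two, Fin.mk_zero, Fin.mk_one]
      linear_combination hm₂
    · simp [Matrix.mul_apply, Fin.sum_univ_two, Fin.mk_zero, Fin.mk_one]
      linear_combination hm₃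
    · simp [Matrix.mul_apply, Fin.sum_univ_two, Fin.mk_zero, Fin.mk_one]
      linear_combination hm'
  have hPA : Pm * Am = Bm * Qm := by
    apply smul_matrix_cancel hd0
    calc d • (Pm * Am) = (d • Pm) * Am := by rw [smul_mul_assoc]
    _ = Bm * Qm * Am.adjugate * Am := by rw [hN]
    _ = Bm * Qm * (Am.adjugate * Am) := by rw [Matrix.mul_assoc]
    _ = Bm * Qm * (d • 1) := by rw [Matrix.adjugate_mul, hdetAm]
    _ = d • (Bm * Qm) := by rw [Matrix.mul_smul, Matrix.mul_one]
  have hdetPm : Pm.det = 1 := by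
    have h1 : (d • Pm).det = d ^ 2 * Pm.det := by
      rw [Matrix.det_smul]; norm_num
    have h2 : (Bm * Qm * Am.adjugate).det = d * d := by
      rw [Matrix.det_mul, Matrix.det_mul, Matrix.det_adjugate, hdetAm, hdetBm, hdetQm]
      norm_num
    have h3 : d ^ 2 * Pm.det = d ^ 2 * 1 := by
      rw [← h1, ← hN, h2]; ring
    exact mul_left_cancel₀ (pow_ne_zero 2 hd0) h3
  refine ⟨Pm, Qm.adjugate, hdetPm, ?_, ?_⟩
  · rw [Matrix.det_adjugate, hdetQm, one_pow]
  · calc Bm = Bm * (Qm * Qm.adjugate) := by rw [Matrix.mul_adjugate, hdetQm, one_smul, Matrix.mul_one]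
    _ = (Bm * Qm) * Qm.adjugate := by rw [Matrix.mul_assoc]
    _ = Pm * Am * Qm.adjugate := by rw [hPA]

lemma reduce (A : Matrix (Fin 2) (Fin 2) O) (hA : A.det ≠ 0) :
    ∃ (P Q : Matrix (Fin 2) (Fin 2) O) (a b₁ c₁ e : O), P.det = 1 ∧ Q.det = 1 ∧
      P * A * Q = !![a, A.det * b₁; A.det * c₁, e] ∧
      Ideal.span {a} ⊔ delta1 A * Ideal.span {A.det} = delta1 A := by
  obtain ⟨P₀, Q₀, hP₀, hQ₀, hcorn⟩ := exists_corner A hA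
  set A₀ : Matrix (Fin 2) (Fin 2) O := P₀ * A * Q₀ with hA₀
  have hP₀u : IsUnit P₀.det := by rw [hP₀]; exact isUnit_one
  have hQ₀u : IsUnit Q₀.det := by rw [hQ₀]; exact isUnit_one
  have hd1A₀ : delta1 A₀ = delta1 A := delta1_unit_eq P₀ A Q₀ hP₀u hQ₀u
  have ha : A₀ 0 0 = A₀ 0 0 := rfl
  -- decompose the entries 0 1 and 1 0
  have hb : A₀ 0 1 ∈ Ideal.span {A₀ 0 0} ⊔ delta1 A * Ideal.span {A.det} := by
    rw [hcorn, ← hd1A₀]; exact mem_delta1 A₀ 0 1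
  obtain ⟨ub, hub, vb, hvb, hbsum⟩ := Submodule.mem_sup.mp hb
  obtain ⟨β, hβ⟩ := Ideal.mem_span_singleton'.mp hub
  rw [mul_comm] at hvb
  obtain ⟨b₁, hb₁I, hb₁⟩ := Ideal.mem_span_singleton_mul.mp hvb
  have hbeq : A₀ 0 1 = β * A₀ 0 0 + A.det * b₁ := by rw [← hbsum, hβ, hb₁]
  have hc : A₀ 1 0 ∈ Ideal.span {A₀ 0 0} ⊔ delta1 A * Ideal.span {A.det} := by
    rw [hcorn, ← hd1A₀]; exact mem_delta1 A₀ 1 0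
  obtain ⟨uc, huc, vc, hvc, hcsum⟩ := Submodule.mem_sup.mp hc
  obtain ⟨γ, hγ⟩ := Ideal.mem_span_singleton'.mp huc
  rw [mul_comm] at hvc
  obtain ⟨c₁, hc₁I, hc₁⟩ := Ideal.mem_span_singleton_mul.mp hvc
  have hceq : A₀ 1 0 = γ * A₀ 0 0 + A.det * c₁ := by rw [← hcsum, hγ, hc₁]
  refine ⟨!![1, 0; -γ, 1] * P₀, Q₀ * !![1, -β; 0, 1], A₀ 0 0, b₁, c₁,
    A₀ 1 1 - A₀ 1 0 * β - γ * (A₀ 0 1 - A₀ 0 0 * β), ?_, ?_, ?_, ?_⟩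
  · rw [Matrix.det_mul, hP₀, Matrix.det_fin_two_of]; ring
  · rw [Matrix.det_mul, hQ₀, Matrix.det_fin_two_of]; ring
  · have hassoc : !![1, 0; -γ, 1] * P₀ * A * (Q₀ * !![1, -β; 0, 1]) =
        !![1, 0; -γ, 1] * A₀ * !![1, -β; 0, 1] := by
      simp only [hA₀, Matrix.mul_assoc]
    rw [hassoc]
    nth_rewrite 1 [Matrix.eta_fin_two A₀]
    rw [Matrix.mul_fin_two, Matrix.mul_fin_two]
    ext i j
    fin_cases i <;> fin_cases j
    · simp
    · simp
      linear_combination hbeq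
    · simp
      linear_combination hceq
    · simp
      ring
  · exact hcorn

end DedekindPart

end Stmt0Aux

open Stmt0Aux in
theorem stmt0 {O : Type*} [CommRing O] [IsDomain O] [IsDedekindDomain O]
    (A B : Matrix (Fin 2) (Fin 2) O) (hA : A.det ≠ 0) (hB : B.det ≠ 0) :
    doubleCoset' A = doubleCoset' B ↔ delta1 A = delta1 B ∧ delta2 A = delta2 B := by
  constructor
  · intro h
    have hBmem : B ∈ doubleCoset' A := by
      rw [h]
      exact ⟨1, 1, by simp, by simp, by simp⟩
    obtain ⟨P, Q, hP, hQ, hBeq⟩ := hBmem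
    constructor
    · rw [hBeq, delta1_unit_eq P A Q hP hQ]
    · rw [hBeq, delta2_unit_eq P A Q hP hQ]
  · rintro ⟨h1, h2⟩
    have hassoc : Associated A.det B.det := by
      rw [← Ideal.span_singleton_eq_span_singleton]
      exact h2
    by_cases hu : IsUnit A.det
    · -- the case of unit determinant
      have hP : IsUnit (B * A⁻¹).det := by
        rw [Matrix.det_mul]
        exact (hassoc.isUnit hu).mul (Matrix.isUnit_nonsing_inv_det _ hu)
      have hBeq : B = (B * A⁻¹) * A * 1 := by
        rw [Matrix.mul_one, Matrix.mul_assoc, Matrix.nonsing_inv_mul _ hu, Matrix.mul_one]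
      exact (doubleCoset_eq A B (B * A⁻¹) 1 hP (by simp) hBeq).symm
    · obtain ⟨u, hu2⟩ := hassoc
      set d : O := A.det with hd
      have hd0 : d ≠ 0 := hA
      -- normalize B to have determinant d
      set B' : Matrix (Fin 2) (Fin 2) O := !![(↑u⁻¹ : O), 0; 0, 1] * B with hB'
      have hB'eq : B' = !![(↑u⁻¹ : O), 0; 0, 1] * B * 1 := by rw [Matrix.mul_one]
      have hUdet : (!![(↑u⁻¹ : O), 0; 0, 1]).det = (↑u⁻¹ : O) := by
        rw [Matrix.det_fin_two_of]; ring
      have hUdetu : IsUnit (!![(↑u⁻¹ : O), 0; 0, 1]).det := by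
        rw [hUdet]; exact u⁻¹.isUnit
      have hB'det : B'.det = d := by
        rw [hB', Matrix.det_mul, hUdet, ← hu2]
        calc (↑u⁻¹ : O) * (A.det * ↑u) = A.det * (↑u * ↑u⁻¹) := by ring
        _ = A.det := by rw [Units.mul_inv, mul_one]
      have hdcB' : doubleCoset' B' = doubleCoset' B :=
        doubleCoset_eq B B' _ 1 hUdetu (by simp) hB'eq
      have hd1B' : delta1 B' = delta1 A := by
        rw [hB'eq, delta1_unit_eq _ B 1 hUdetu (by simp)]
        exact h1.symm
      set I : Ideal O := delta1 A with hI
      have hIbot : I ≠ ⊥ := delta1_ne_bot A hA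
      -- reduce A
      obtain ⟨Pa, Qa, a, b₁, c₁, e, hPa, hQa, hAeq, hcornA⟩ := reduce A hA
      -- reduce B'
      have hB'0 : B'.det ≠ 0 := by rw [hB'det]; exact hd0
      obtain ⟨Pb, Qb, a', b₁', c₁', e', hPb, hQb, hBeq, hcornB⟩ := reduce B' hB'0
      rw [hB'det] at hBeq
      rw [hd1B', hB'det] at hcornB
      set A₁ : Matrix (Fin 2) (Fin 2) O := !![a, d * b₁; d * c₁, e] with hA₁
      set B₁ : Matrix (Fin 2) (Fin 2) O := !![a', d * b₁'; d * c₁', e'] with hB₁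
      have hPau : IsUnit Pa.det := by rw [hPa]; exact isUnit_one
      have hQau : IsUnit Qa.det := by rw [hQa]; exact isUnit_one
      have hPbu : IsUnit Pb.det := by rw [hPb]; exact isUnit_one
      have hQbu : IsUnit Qb.det := by rw [hQb]; exact isUnit_one
      have hd1A₁ : delta1 A₁ = I := by rw [← hAeq, delta1_unit_eq _ _ _ hPau hQau]
      have hd1B₁ : delta1 B₁ = I := by
        rw [← hBeq, delta1_unit_eq _ _ _ hPbu hQbu, hd1B']
      have hdetA₁ : A₁.det = d := by
        rw [← hAeq, Matrix.det_mul, Matrix.det_mul, hPa, hQa, one_mul, mul_one]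
      have hdetB₁ : B₁.det = d := by
        rw [← hBeq, Matrix.det_mul, Matrix.det_mul, hPb, hQb, one_mul, mul_one, hB'det]
      have hdet : a * e - d * b₁ * (d * c₁) = d := by
        have := hdetA₁
        rwa [hA₁, Matrix.det_fin_two_of] at this
      have hdet' : a' * e' - d * b₁' * (d * c₁') = d := by
        have := hdetB₁
        rwa [hB₁, Matrix.det_fin_two_of] at this
      -- entries of A₁ and B₁ are in I
      have haM : a ∈ I := by
        have := mem_delta1 A₁ 0 0
        rw [hd1A₁] at this; simpa [hA₁] using this
      have heM : e ∈ I := by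
        have := mem_delta1 A₁ 1 1
        rw [hd1A₁] at this; simpa [hA₁] using this
      have hbM : d * b₁ ∈ I := by
        have := mem_delta1 A₁ 0 1
        rw [hd1A₁] at this; simpa [hA₁] using this
      have hcM : d * c₁ ∈ I := by
        have := mem_delta1 A₁ 1 0
        rw [hd1A₁] at this; simpa [hA₁] using this
      have ha'M : a' ∈ I := by
        have := mem_delta1 B₁ 0 0
        rw [hd1B₁] at this; simpa [hB₁] using this
      -- the ideals J and J'
      obtain ⟨J, hJeq⟩ : I ∣ Ideal.span {a} :=
        Ideal.dvd_iff_le.mpr ((Ideal.span_singleton_le_iff_mem _).mpr haM)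
      obtain ⟨J', hJ'eq⟩ : I ∣ Ideal.span {a'} :=
        Ideal.dvd_iff_le.mpr ((Ideal.span_singleton_le_iff_mem _).mpr ha'M)
      have hJtop : J ⊔ Ideal.span {d} = ⊤ := by
        have hcalc : I * (J ⊔ Ideal.span {d}) = I * ⊤ := by
          rw [Ideal.mul_sup, ← hJeq, Ideal.mul_top]
          exact hcornA
        exact mul_left_cancel₀ hIbot hcalc
      have hJ'top : J' ⊔ Ideal.span {d} = ⊤ := by
        have hcalc : I * (J' ⊔ Ideal.span {d}) = I * ⊤ := by
          rw [Ideal.mul_sup, ← hJ'eq, Ideal.mul_top]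
          exact hcornB
        exact mul_left_cancel₀ hIbot hcalc
      -- span {d} ≤ I * I
      have hdII : Ideal.span {d} ≤ I * I := by
        rw [Ideal.span_singleton_le_iff_mem]
        have hdval : d = a * e - (d * b₁) * (d * c₁) := by linear_combination -hdet
        rw [hdval]
        exact Submodule.sub_mem _ (Ideal.mul_mem_mul haM heM) (Ideal.mul_mem_mul hbM hcM)
      -- apply the core lemma
      obtain ⟨P, Q, hPdet, hQdet, hcoreEq⟩ := core d hd0 hu I J J' hIbot a b₁ c₁ e a' b₁' c₁' e'
        hJeq hJ'eq haM ha'M hJtop hJ'top hdet hdet' hdII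
      -- assemble the chain of double coset equalities
      have e1 : doubleCoset' A₁ = doubleCoset' A :=
        doubleCoset_eq A A₁ Pa Qa hPau hQau hAeq.symm
      have e2 : doubleCoset' B₁ = doubleCoset' B' :=
        doubleCoset_eq B' B₁ Pb Qb hPbu hQbu hBeq.symm
      have e3 : doubleCoset' B₁ = doubleCoset' A₁ :=
        doubleCoset_eq A₁ B₁ P Q (by rw [hPdet]; exact isUnit_one)
          (by rw [hQdet]; exact isUnit_one) hcoreEq
      rw [← e1, ← e3, e2, hdcB']
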